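/- Let u: [-δ,δ] × [0,T] → ℝ be C² in s and C¹ in t, even in s, satisfying ∂u/∂t = C₁² u'' + C₂ u' + C₃ u + C₄²·(u'/s) (with u'/s interpreted as u''(0) at s = 0 via L'Hôpital), where C₁, C₂, C₃, C₄ are continuous bounded functions. If u(·,0) > 0 on [-δ,δ] and u > 0 on {-δ,δ} × [0,T], then u > 0 on [-δ,δ] × [0,T]. -/

import Mathlib

open Set

open Filter Topology


/-- At a one-sided (left) minimum, the derivative is nonpositive. -/
lemma deriv_nonpos_of_isMinOn_left {f : ℝ → ℝ} {a t₀ : ℝ} (ha : a < t₀)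
    (hf : DifferentiableAt ℝ f t₀) (hmin : ∀ t ∈ Icc a t₀, f t₀ ≤ f t) :
    deriv f t₀ ≤ 0 := by
  have hslope : Tendsto (slope f t₀) (𝓝[<] t₀) (𝓝 (deriv f t₀)) :=
    (hasDerivAt_iff_tendsto_slope.1 hf.hasDerivAt).mono_left
      (nhdsWithin_mono _ (fun x hx => ne_of_lt hx))
  refine le_of_tendsto hslope ?_
  filter_upwards [Ioo_mem_nhdsLT_of_mem ⟨ha, le_rfl⟩] with t ht
  have h1 : f t₀ ≤ f t := hmin t ⟨ht.1.le, ht.2.le⟩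
  have h2 : t - t₀ < 0 := by linarith [ht.2]
  rw [slope_def_field]
  exact div_nonpos_of_nonneg_of_nonpos (by linarith) h2.le

/-- Second derivative test necessity: at a local minimum of a `C²` function the
second derivative is nonnegative. -/
lemma deriv_deriv_nonneg_of_isLocalMin {f : ℝ → ℝ} {a : ℝ}
    (hf : ContDiff ℝ 2 f) (hmin : IsLocalMin f a) :
    0 ≤ deriv (deriv f) a := by
  by_contra hneg
  push_neg at hneg
  have hf1 : Differentiable ℝ f := hf.differentiable two_ne_zero
  have hg : DifferentiableAt ℝ (deriv f) a :=
    ((hf.iterate_deriv' 1 1).differentiable (by simp)).differentiableAt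
  have hda : deriv f a = 0 := hmin.deriv_eq_zero
  have hslope : Tendsto (slope (deriv f) a) (𝓝[>] a) (𝓝 (deriv (deriv f) a)) :=
    (hasDerivAt_iff_tendsto_slope.1 hg.hasDerivAt).mono_left
      (nhdsWithin_mono _ (fun x hx => ne_of_gt hx))
  have hev : ∀ᶠ t in 𝓝[>] a, deriv f t < 0 := by
    have := hslope.eventually_lt_const hneg
    filter_upwards [this, self_mem_nhdsWithin] with t ht (ht' : a < t)
    rw [slope_def_field, hda, sub_zero] at ht
    have := mul_neg_of_neg_of_pos ht (sub_pos.2 ht')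
    rw [div_mul_cancel₀] at this
    · linarith
    · exact ne_of_gt (sub_pos.2 ht')
  obtain ⟨r, hr, hrsub⟩ := mem_nhdsGT_iff_exists_Ioo_subset.1 hev
  have hmin' : ∀ᶠ t in 𝓝[>] a, f a ≤ f t :=
    nhdsWithin_le_nhds hmin
  obtain ⟨r', hr', hrsub'⟩ := mem_nhdsGT_iff_exists_Ioo_subset.1 hmin'
  set b := min r r'
  have hab : a < b := lt_min hr hr'
  set c := (a + b) / 2
  have hac : a < c := by simp only [c]; linarith
  have hcb : c < b := by simp only [c]; linarith
  obtain ⟨x, hx, hxd⟩ := exists_deriv_eq_slope f hac (hf1.continuous.continuousOn)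
    (fun y _ => (hf1 y).differentiableWithinAt)
  have h1 : deriv f x < 0 := hrsub ⟨hx.1, lt_of_lt_of_le hx.2 (le_trans hcb.le (min_le_left _ _))⟩
  have h2 : f a ≤ f c := hrsub' ⟨hac, lt_of_lt_of_le hcb (min_le_right _ _)⟩
  rw [hxd] at h1
  have hca : (0:ℝ) < c - a := by linarith
  have := div_nonneg (by linarith : (0:ℝ) ≤ f c - f a) hca.le
  linarith

lemma max_principle_nonneg (δ T : ℝ) (hδ : 0 < δ) (hT : 0 < T)
    (z C₁ C₂ C₃ C₄ : ℝ → ℝ → ℝ) (M : ℝ)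
    (hz_s : ∀ t ∈ Icc (0 : ℝ) T, ContDiff ℝ 2 (fun s => z s t))
    (hz_t : ∀ s ∈ Icc (-δ) δ, ∀ t ∈ Icc (0 : ℝ) T, DifferentiableAt ℝ (fun τ => z s τ) t)
    (hz_cont : Continuous (Function.uncurry z))
    (hC₃ : ∀ s ∈ Icc (-δ) δ, ∀ t ∈ Icc (0 : ℝ) T, C₃ s t ≤ M)
    (hpde : ∀ s ∈ Icc (-δ) δ, ∀ t ∈ Icc (0 : ℝ) T,
      (C₁ s t) ^ 2 * deriv (deriv (fun σ => z σ t)) s +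
          C₂ s t * deriv (fun σ => z σ t) s + C₃ s t * z s t +
          (C₄ s t) ^ 2 *
            (if s = 0 then deriv (deriv (fun σ => z σ t)) 0
              else deriv (fun σ => z σ t) s / s) ≤ deriv (fun τ => z s τ) t)
    (hinit : ∀ s ∈ Icc (-δ) δ, 0 ≤ z s 0)
    (hbdry : ∀ t ∈ Icc (0 : ℝ) T, 0 ≤ z δ t ∧ 0 ≤ z (-δ) t) :
    ∀ s ∈ Icc (-δ) δ, ∀ t ∈ Icc (0 : ℝ) T, 0 ≤ z s t := by
  set K := M + 1 with hK
  suffices H : ∀ ε > (0:ℝ), ∀ s ∈ Icc (-δ) δ, ∀ t ∈ Icc (0:ℝ) T,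
      0 ≤ z s t * Real.exp (-K * t) + ε * t by
    intro s hs t ht
    have hexp := Real.exp_pos (-K * t)
    have hx : 0 ≤ z s t * Real.exp (-K * t) := by
      refine le_of_forall_pos_le_add ?_
      intro ε hε
      have hH := H (ε / T) (by positivity) s hs t ht
      have hεt : (ε / T) * t ≤ ε := by
        rw [div_mul_eq_mul_div, div_le_iff₀ hT]
        nlinarith [ht.1, ht.2]
      linarith
    by_contra hneg
    push_neg at hneg
    nlinarith
  intro ε hε
  set v : ℝ × ℝ → ℝ := fun p => z p.1 p.2 * Real.exp (-K * p.2) + ε * p.2 with hv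
  have hvcont : Continuous v := by
    apply Continuous.add
    · exact (hz_cont.mul ((Real.continuous_exp.comp (continuous_const.mul continuous_snd))))
    · exact continuous_const.mul continuous_snd
  set Q : Set (ℝ × ℝ) := Icc (-δ) δ ×ˢ Icc (0:ℝ) T with hQ
  have hQc : IsCompact Q := (isCompact_Icc).prod isCompact_Icc
  have hQne : Q.Nonempty := ⟨(0, 0), by
    refine ⟨⟨?_, ?_⟩, ⟨le_rfl, hT.le⟩⟩ <;> simp <;> linarith⟩
  obtain ⟨p₀, hp₀Q, hp₀'⟩ := hQc.exists_isMinOn hQne hvcont.continuousOn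
  have hp₀ : ∀ p ∈ Q, v p₀ ≤ v p := fun p hp => hp₀' hp
  obtain ⟨s₀, t₀⟩ := p₀
  have hs₀ : s₀ ∈ Icc (-δ) δ := hp₀Q.1
  have ht₀ : t₀ ∈ Icc (0:ℝ) T := hp₀Q.2
  have hmin0 : 0 ≤ v (s₀, t₀) := by
    rcases eq_or_lt_of_le ht₀.1 with h | htpos
    · simp only [hv, ← h]
      have := hinit s₀ hs₀
      nlinarith [Real.exp_pos (-K * (0:ℝ))]
    rcases eq_or_lt_of_le hs₀.2 with h | hslt
    · have := (hbdry t₀ ht₀).1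
      simp only [hv, h]
      nlinarith [Real.exp_pos (-K * t₀), mul_nonneg hε.le ht₀.1]
    rcases eq_or_lt_of_le hs₀.1 with h | hsgt
    · have := (hbdry t₀ ht₀).2
      simp only [hv, ← h]
      nlinarith [Real.exp_pos (-K * t₀), mul_nonneg hε.le ht₀.1]
    -- interior case
    have hexp : (0:ℝ) < Real.exp (-K * t₀) := Real.exp_pos _
    have hspatial : IsLocalMin (fun σ => z σ t₀) s₀ := by
      have hmem : Ioo (-δ) δ ∈ 𝓝 s₀ := Ioo_mem_nhds hsgt hslt
      have h : ∀ᶠ σ in 𝓝 s₀, z s₀ t₀ ≤ z σ t₀ := by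
        filter_upwards [hmem] with σ hσ
        have h2 := hp₀ (σ, t₀) ⟨⟨hσ.1.le, hσ.2.le⟩, ht₀⟩
        simp only [hv] at h2
        nlinarith
      exact h
    have hd1 : deriv (fun σ => z σ t₀) s₀ = 0 := hspatial.deriv_eq_zero
    have hd2 : 0 ≤ deriv (deriv (fun σ => z σ t₀)) s₀ :=
      deriv_deriv_nonneg_of_isLocalMin (hz_s t₀ ht₀) hspatial
    have htderiv : HasDerivAt (fun τ => v (s₀, τ))
        (deriv (fun τ => z s₀ τ) t₀ * Real.exp (-K * t₀)
          + z s₀ t₀ * (Real.exp (-K * t₀) * (-K)) + ε) t₀ := by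
      have h1 : HasDerivAt (fun τ : ℝ => -K * τ) (-K) t₀ := by
        simpa using (hasDerivAt_id t₀).const_mul (-K)
      have h2 : HasDerivAt (fun τ => Real.exp (-K * τ)) (Real.exp (-K * t₀) * (-K)) t₀ :=
        h1.exp
      have h3 := ((hz_t s₀ hs₀ t₀ ht₀).hasDerivAt.mul h2).add
        ((hasDerivAt_id t₀).const_mul ε)
      simp only [mul_one] at h3
      exact h3.congr_of_eventuallyEq (Filter.Eventually.of_forall fun τ => rfl)
    have htle : deriv (fun τ => z s₀ τ) t₀ * Real.exp (-K * t₀)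
        + z s₀ t₀ * (Real.exp (-K * t₀) * (-K)) + ε ≤ 0 := by
      rw [← htderiv.deriv]
      apply deriv_nonpos_of_isMinOn_left htpos htderiv.differentiableAt
      intro t ht
      exact hp₀ (s₀, t) ⟨hs₀, ⟨ht.1, le_trans ht.2 ht₀.2⟩⟩
    have hpde' := hpde s₀ hs₀ t₀ ht₀
    rw [hd1] at hpde'
    have hterm : 0 ≤ (if s₀ = 0 then deriv (deriv (fun σ => z σ t₀)) 0
        else (0:ℝ) / s₀) := by
      split_ifs with h
      · rw [h] at hd2; exact hd2
      · simp
    have hC3 := hC₃ s₀ hs₀ t₀ ht₀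
    have hz₀ : C₃ s₀ t₀ * z s₀ t₀ ≤ deriv (fun τ => z s₀ τ) t₀ := by
      nlinarith [mul_nonneg (sq_nonneg (C₁ s₀ t₀)) hd2,
        mul_nonneg (sq_nonneg (C₄ s₀ t₀)) hterm]
    have hzpos : 0 < z s₀ t₀ := by
      by_contra hle
      push_neg at hle
      have h2 : C₃ s₀ t₀ * z s₀ t₀ * Real.exp (-K * t₀)
          ≤ deriv (fun τ => z s₀ τ) t₀ * Real.exp (-K * t₀) :=
        mul_le_mul_of_nonneg_right hz₀ hexp.le
      have h3 : K * z s₀ t₀ ≤ C₃ s₀ t₀ * z s₀ t₀ := by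
        nlinarith [mul_nonneg (by linarith : (0:ℝ) ≤ M + 1 - C₃ s₀ t₀)
          (by linarith : (0:ℝ) ≤ -z s₀ t₀)]
      have h4 : K * z s₀ t₀ * Real.exp (-K * t₀)
          ≤ C₃ s₀ t₀ * z s₀ t₀ * Real.exp (-K * t₀) :=
        mul_le_mul_of_nonneg_right h3 hexp.le
      nlinarith
    simp only [hv]
    have hεt : 0 ≤ ε * t₀ := by positivity
    nlinarith [mul_pos hzpos hexp]
  intro s hs t ht
  exact le_trans hmin0 (hp₀ (s, t) ⟨hs, ht⟩)

/-- Maximum principle for the degenerate parabolic equation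
`∂u/∂t = C₁² u'' + C₂ u' + C₃ u + C₄²·u'/s` satisfied by even functions. -/
theorem degenerate_maximum_principle (δ T : ℝ) (hδ : 0 < δ) (hT : 0 < T)
    (u C₁ C₂ C₃ C₄ : ℝ → ℝ → ℝ)
    (hu_s : ∀ t ∈ Icc (0 : ℝ) T, ContDiff ℝ 2 (fun s => u s t))
    (hu_t : ∀ s ∈ Icc (-δ) δ, ContDiff ℝ 1 (fun t => u s t))
    (hu_cont : Continuous (Function.uncurry u))
    (hC_cont : Continuous (Function.uncurry C₁) ∧ Continuous (Function.uncurry C₂) ∧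
      Continuous (Function.uncurry C₃) ∧ Continuous (Function.uncurry C₄))
    (hC_bdd : ∃ M : ℝ, ∀ s ∈ Icc (-δ) δ, ∀ t ∈ Icc (0 : ℝ) T,
      |C₁ s t| ≤ M ∧ |C₂ s t| ≤ M ∧ |C₃ s t| ≤ M ∧ |C₄ s t| ≤ M)
    (heven : ∀ s t : ℝ, u (-s) t = u s t)
    (hpde : ∀ s ∈ Icc (-δ) δ, ∀ t ∈ Icc (0 : ℝ) T,
      deriv (fun τ => u s τ) t =
        (C₁ s t) ^ 2 * deriv (deriv (fun σ => u σ t)) s +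
          C₂ s t * deriv (fun σ => u σ t) s + C₃ s t * u s t +
          (C₄ s t) ^ 2 *
            (if s = 0 then deriv (deriv (fun σ => u σ t)) 0
              else deriv (fun σ => u σ t) s / s))
    (hinit : ∀ s ∈ Icc (-δ) δ, 0 < u s 0)
    (hbdry : ∀ t ∈ Icc (0 : ℝ) T, 0 < u δ t ∧ 0 < u (-δ) t) :
    ∀ s ∈ Icc (-δ) δ, ∀ t ∈ Icc (0 : ℝ) T, 0 < u s t := by
  obtain ⟨M, hM⟩ := hC_bdd
  set M' : ℝ := max M 0 with hM'
  set L : ℝ := -(M' + 1) with hL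
  -- minimum of u on the three parts of the parabolic boundary
  have hδmem : δ ∈ Icc (-δ) δ := ⟨by linarith, le_rfl⟩
  have hδmem' : -δ ∈ Icc (-δ) δ := ⟨le_rfl, by linarith⟩
  have h0T : (0:ℝ) ∈ Icc (0:ℝ) T := ⟨le_rfl, hT.le⟩
  obtain ⟨s₁, hs₁, hm₁⟩ := isCompact_Icc.exists_isMinOn (nonempty_Icc.2 (by linarith : -δ ≤ δ))
    ((hu_s 0 h0T).continuous.continuousOn)
  obtain ⟨t₂, ht₂, hm₂⟩ := isCompact_Icc.exists_isMinOn (nonempty_Icc.2 hT.le)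
    ((hu_t δ hδmem).continuous.continuousOn)
  obtain ⟨t₃, ht₃, hm₃⟩ := isCompact_Icc.exists_isMinOn (nonempty_Icc.2 hT.le)
    ((hu_t (-δ) hδmem').continuous.continuousOn)
  set c : ℝ := min (u s₁ 0) (min (u δ t₂) (u (-δ) t₃)) with hc
  have hcpos : 0 < c := by
    refine lt_min (hinit s₁ hs₁) (lt_min (hbdry t₂ ht₂).1 (hbdry t₃ ht₃).2)
  set z : ℝ → ℝ → ℝ := fun s t => u s t - c * Real.exp (L * t) with hz
  -- derivative facts for z
  have hexpd : ∀ t : ℝ, HasDerivAt (fun τ => c * Real.exp (L * τ))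
      (c * (Real.exp (L * t) * L)) t := by
    intro t
    have h1 : HasDerivAt (fun τ : ℝ => L * τ) L t := by
      simpa using (hasDerivAt_id t).const_mul L
    exact h1.exp.const_mul c
  have hzderiv_s : ∀ t : ℝ, deriv (fun σ => z σ t) = deriv (fun σ => u σ t) := by
    intro t
    funext x
    exact deriv_sub_const _
  have hznonneg : ∀ s ∈ Icc (-δ) δ, ∀ t ∈ Icc (0:ℝ) T, 0 ≤ z s t := by
    apply max_principle_nonneg δ T hδ hT z C₁ C₂ C₃ C₄ M'
    · intro t ht
      exact (hu_s t ht).sub contDiff_const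
    · intro s hs t ht
      exact (((hu_t s hs).differentiable one_ne_zero) t).sub (hexpd t).differentiableAt
    · show Continuous fun p : ℝ × ℝ => u p.1 p.2 - c * Real.exp (L * p.2)
      exact hu_cont.sub
        (continuous_const.mul (Real.continuous_exp.comp (continuous_const.mul continuous_snd)))
    · intro s hs t ht
      have := (hM s hs t ht).2.2.1
      have := le_max_left M (0:ℝ)
      calc C₃ s t ≤ |C₃ s t| := le_abs_self _
        _ ≤ M := (hM s hs t ht).2.2.1
        _ ≤ M' := le_max_left M 0
    · intro s hs t ht
      -- derivative of z in time
      have hut : HasDerivAt (fun τ => u s τ) (deriv (fun τ => u s τ) t) t :=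
        (((hu_t s hs).differentiable one_ne_zero) t).hasDerivAt
      have hzt : deriv (fun τ => z s τ) t
          = deriv (fun τ => u s τ) t - c * (Real.exp (L * t) * L) :=
        (hut.sub (hexpd t)).deriv
      rw [hzt, hzderiv_s t]
      have hzu : z s t = u s t - c * Real.exp (L * t) := rfl
      rw [hzu, hpde s hs t ht]
      have hexp0 : (0:ℝ) < Real.exp (L * t) := Real.exp_pos _
      have hC3 : -M' ≤ C₃ s t := by
        have h1 : |C₃ s t| ≤ M := (hM s hs t ht).2.2.1
        have h2 : M ≤ M' := le_max_left M 0
        have := neg_abs_le (C₃ s t)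
        linarith
      have hfac : 0 ≤ c * Real.exp (L * t) * (C₃ s t - L) := by
        have : 0 < C₃ s t - L := by rw [hL]; linarith
        positivity
      nlinarith
    · intro s hs
      have h1 : u s₁ 0 ≤ u s 0 := hm₁ hs
      have h2 : c ≤ u s₁ 0 := min_le_left _ _
      have : z s 0 = u s 0 - c * Real.exp (L * 0) := rfl
      rw [this]
      simp only [mul_zero, Real.exp_zero, mul_one]
      linarith
    · intro t ht
      have hLt : Real.exp (L * t) ≤ 1 := by
        apply Real.exp_le_one_iff.2
        have hL0 : L ≤ 0 := by
          have h0 : (0:ℝ) ≤ M' := le_max_right M 0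
          rw [hL]; linarith
        exact mul_nonpos_of_nonpos_of_nonneg hL0 ht.1
      constructor
      · have h1 : u δ t₂ ≤ u δ t := hm₂ ht
        have h2 : c ≤ u δ t₂ := le_trans (min_le_right _ _) (min_le_left _ _)
        have h3 : z δ t = u δ t - c * Real.exp (L * t) := rfl
        rw [h3]
        nlinarith [Real.exp_pos (L * t)]
      · have h1 : u (-δ) t₃ ≤ u (-δ) t := hm₃ ht
        have h2 : c ≤ u (-δ) t₃ := le_trans (min_le_right _ _) (min_le_right _ _)
        have h3 : z (-δ) t = u (-δ) t - c * Real.exp (L * t) := rfl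
        rw [h3]
        nlinarith [Real.exp_pos (L * t)]
  intro s hs t ht
  have h1 := hznonneg s hs t ht
  have h2 : z s t = u s t - c * Real.exp (L * t) := rfl
  rw [h2] at h1
  nlinarith [Real.exp_pos (L * t), mul_pos hcpos (Real.exp_pos (L * t))]
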